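/- For every positive integer n, the sum over all permutations σ of [n] of (-1) raised to the number of occurrences of the vincular pattern 32-1 in σ equals 2^(n-1). (This is the q = -1 evaluation of the generating function of the number of occurrences of 32-1, showing it exhibits the cyclic sieving phenomenon for involutions with 2^(n-1) fixed points.) -/

import Mathlib

open Finset

namespace P321

variable {n : ℕ}

def occSet (σ : Equiv.Perm (Fin n)) : Finset (Fin n × Fin n) :=
  univ.filter (fun p : Fin n × Fin n =>
    ∃ i1 : Fin n, (i1 : ℕ) = (p.1 : ℕ) + 1 ∧ i1 < p.2 ∧
      σ i1 < σ p.1 ∧ σ p.2 < σ i1)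

def occ (σ : Equiv.Perm (Fin n)) : ℕ := (occSet σ).card

def wt (σ : Equiv.Perm (Fin n)) : ℤ := (-1 : ℤ) ^ occ σ

def Cond (r : ℕ) (σ : Equiv.Perm (Fin n)) : Prop :=
  (∀ j k : Fin n, r ≤ (j : ℕ) → j < k → σ j < σ k) ∧
  (∀ j k : Fin n, (j : ℕ) + 1 = r → r + 1 ≤ (k : ℕ) → σ j < σ k)

instance (r : ℕ) : DecidablePred (Cond r (n := n)) := fun σ => by
  unfold Cond; infer_instance

def C (n r : ℕ) : Finset (Equiv.Perm (Fin n)) := univ.filter (Cond r)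

lemma mem_C {r : ℕ} {σ : Equiv.Perm (Fin n)} : σ ∈ C n r ↔ Cond r σ := by
  simp [C]

lemma mem_occSet {σ : Equiv.Perm (Fin n)} {x : Fin n × Fin n} :
    x ∈ occSet σ ↔ ∃ i1 : Fin n, (i1 : ℕ) = (x.1 : ℕ) + 1 ∧ i1 < x.2 ∧
      σ i1 < σ x.1 ∧ σ x.2 < σ i1 := by
  simp [occSet]

section Step

variable {r : ℕ} {p q : Fin n} (hp : (p : ℕ) + 1 = r) (hq : (q : ℕ) = r)

include hp hq

lemma swap_ne {x : Fin n} (h1 : (x : ℕ) + 1 ≠ r) (h2 : (x : ℕ) ≠ r) :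
    Equiv.swap p q x = x := by
  apply Equiv.swap_apply_of_ne_of_ne
  · intro h; apply h1; rw [h]; exact hp
  · intro h; apply h2; rw [h]; exact hq

lemma swap_mem_C {σ : Equiv.Perm (Fin n)} (hσ : Cond r σ) :
    Cond r (σ * Equiv.swap p q) := by
  have hpq : p < q := by rw [Fin.lt_def]; omega
  constructor
  · intro j k hj hjk
    have hk : r < (k : ℕ) := by
      have := Fin.lt_def.mp hjk; omega
    have hks : Equiv.swap p q k = k := swap_ne hp hq (by omega) (by omega)
    by_cases hjq : j = q
    · subst hjq
      simp only [Equiv.Perm.mul_apply, Equiv.swap_apply_right, hks]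
      exact hσ.2 p k hp (by omega)
    · have hjv : (j : ℕ) ≠ r := fun h => hjq (Fin.ext (by omega))
      have hjs : Equiv.swap p q j = j := swap_ne hp hq (by omega) hjv
      simp only [Equiv.Perm.mul_apply, hjs, hks]
      exact hσ.1 j k hj hjk
  · intro j k hj hk
    have hjp : j = p := Fin.ext (by omega)
    rw [hjp]
    have hks : Equiv.swap p q k = k := swap_ne hp hq (by omega) (by omega)
    simp only [Equiv.Perm.mul_apply, Equiv.swap_apply_left, hks]
    exact hσ.1 q k (by omega) (by rw [Fin.lt_def]; omega)

lemma occ_classify {σ : Equiv.Perm (Fin n)} (hσ : Cond r σ) {x : Fin n × Fin n}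
    (hx : x ∈ occSet σ) :
    ((x.1 : ℕ) + 2 < r) ∨
      ((x.1 : ℕ) + 2 = r ∧ x.2 = q ∧ σ q < σ p ∧ σ p < σ x.1) := by
  obtain ⟨i1, h1, h2, h3, h4⟩ := mem_occSet.mp hx
  rcases lt_trichotomy ((i1 : ℕ) + 1) r with hlt | heq | hgt
  · left; omega
  · -- i1 = p
    have hi1p : i1 = p := Fin.ext (by omega)
    rw [hi1p] at h2 h3 h4
    have hk : r ≤ (x.2 : ℕ) := by have := Fin.lt_def.mp h2; omega
    rcases eq_or_lt_of_le hk with hk' | hk'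
    · right
      have hx2q : x.2 = q := Fin.ext (by omega)
      exact ⟨by omega, hx2q, by rw [← hx2q]; exact h4, h3⟩
    · exact absurd (hσ.2 p x.2 hp (by omega)) (not_lt.mpr (le_of_lt h4))
  · -- i1 ≥ r
    exfalso
    have hi1 : r ≤ (i1 : ℕ) := by omega
    by_cases hx1 : r ≤ (x.1 : ℕ)
    · exact absurd (hσ.1 x.1 i1 hx1 (by rw [Fin.lt_def]; omega)) (not_lt.mpr (le_of_lt h3))
    · have : (i1 : ℕ) = r := by omega
      have := hσ.1 i1 x.2 (by omega) h2
      exact absurd this (not_lt.mpr (le_of_lt h4))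

lemma occ_eq {σ : Equiv.Perm (Fin n)} (hσ : Cond r σ) :
    occ σ = ((occSet σ).filter (fun x => (x.1 : ℕ) + 2 < r)).card
      + (if σ q < σ p ∧ ∃ j : Fin n, (j : ℕ) + 2 = r ∧ σ p < σ j then 1 else 0) := by
  classical
  have hsplit := Finset.card_filter_add_card_filter_not
    (s := occSet σ) (p := fun x => (x.1 : ℕ) + 2 < r)
  rw [occ, ← hsplit]
  congr 1
  by_cases hc : σ q < σ p ∧ ∃ j : Fin n, (j : ℕ) + 2 = r ∧ σ p < σ j
  · obtain ⟨hqp, j, hj2, hpj⟩ := hc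
    rw [if_pos ⟨hqp, j, hj2, hpj⟩]
    have hset : (occSet σ).filter (fun x => ¬ ((x.1 : ℕ) + 2 < r)) = {(j, q)} := by
      ext x
      simp only [mem_filter, mem_singleton]
      constructor
      · rintro ⟨hx, hnot⟩
        rcases occ_classify hp hq hσ hx with h | ⟨h1, h2, h3, h4⟩
        · exact absurd h hnot
        · have hx1 : x.1 = j := Fin.ext (by omega)
          exact Prod.ext hx1 h2
      · rintro rfl
        refine ⟨mem_occSet.mpr ⟨p, by simp; omega, by rw [Fin.lt_def]; simp; omega,
          ?_, ?_⟩, by simp; omega⟩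
        · simpa using hpj
        · simpa using hqp
    rw [hset, card_singleton]
  · rw [if_neg hc, Finset.card_eq_zero, Finset.filter_eq_empty_iff]
    intro x hx
    rcases occ_classify hp hq hσ hx with h | ⟨h1, h2, h3, h4⟩
    · exact not_not_intro h
    · exact absurd ⟨h3, x.1, h1, h4⟩ hc

lemma small_map {σ : Equiv.Perm (Fin n)} {x : Fin n × Fin n}
    (hx : x ∈ occSet σ) (hsm : (x.1 : ℕ) + 2 < r) :
    (x.1, Equiv.swap p q x.2) ∈ occSet (σ * Equiv.swap p q) := by
  obtain ⟨i1, h1, h2, h3, h4⟩ := mem_occSet.mp hx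
  have e1 : Equiv.swap p q i1 = i1 := swap_ne hp hq (by omega) (by omega)
  have e2 : Equiv.swap p q x.1 = x.1 := swap_ne hp hq (by omega) (by omega)
  refine mem_occSet.mpr ⟨i1, h1, ?_, ?_, ?_⟩
  · have hx2 : (i1 : ℕ) < (x.2 : ℕ) := Fin.lt_def.mp h2
    rw [Fin.lt_def]
    rcases eq_or_ne x.2 p with hxx | hxx
    · rw [show (x.1, Equiv.swap p q x.2).2 = Equiv.swap p q x.2 from rfl,
        hxx, Equiv.swap_apply_left]
      omega
    · rcases eq_or_ne x.2 q with hyy | hyy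
      · rw [show (x.1, Equiv.swap p q x.2).2 = Equiv.swap p q x.2 from rfl,
          hyy, Equiv.swap_apply_right]
        have : (x.2 : ℕ) = r := by rw [hyy]; exact hq
        omega
      · rw [show (x.1, Equiv.swap p q x.2).2 = Equiv.swap p q x.2 from rfl,
          Equiv.swap_apply_of_ne_of_ne hxx hyy]
        omega
  · simp only [Equiv.Perm.mul_apply, e1, e2]
    exact h3
  · simp only [Equiv.Perm.mul_apply, e1, Equiv.swap_apply_self]
    exact h4

lemma small_card_eq {σ : Equiv.Perm (Fin n)} :
    ((occSet (σ * Equiv.swap p q)).filter (fun x => (x.1 : ℕ) + 2 < r)).card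
      = ((occSet σ).filter (fun x => (x.1 : ℕ) + 2 < r)).card := by
  have hback : (σ * Equiv.swap p q) * Equiv.swap p q = σ := by
    rw [mul_assoc, Equiv.swap_mul_self, mul_one]
  refine Finset.card_bij' (fun x _ => (x.1, Equiv.swap p q x.2))
    (fun x _ => (x.1, Equiv.swap p q x.2)) ?_ ?_ ?_ ?_
  · intro a ha
    simp only [mem_filter] at ha ⊢
    have := small_map hp hq ha.1 ha.2
    rw [hback] at this
    exact ⟨this, ha.2⟩
  · intro a ha
    simp only [mem_filter] at ha ⊢
    exact ⟨small_map hp hq ha.1 ha.2, ha.2⟩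
  · intro a ha
    simp [Equiv.swap_apply_self]
  · intro a ha
    simp [Equiv.swap_apply_self]

lemma occ_swap_B {σ : Equiv.Perm (Fin n)} (hσ : Cond r σ)
    (hB : ¬ ∃ j : Fin n, (j : ℕ) + 2 = r ∧ σ p < σ j ∧ σ q < σ j) :
    occ (σ * Equiv.swap p q) = occ σ := by
  have hσ' := swap_mem_C hp hq hσ
  rw [occ_eq hp hq hσ, occ_eq hp hq hσ', small_card_eq hp hq]
  congr 1
  rw [if_neg, if_neg]
  · rintro ⟨h1, j, hj2, hj3⟩
    exact hB ⟨j, hj2, hj3, lt_trans h1 hj3⟩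
  · rintro ⟨h1, j, hj2, hj3⟩
    have e1 : (σ * Equiv.swap p q) q = σ p := by simp
    have e2 : (σ * Equiv.swap p q) p = σ q := by simp
    have ej : (σ * Equiv.swap p q) j = σ j := by
      rw [Equiv.Perm.mul_apply, swap_ne hp hq (by omega) (by omega)]
    rw [e1, e2] at h1
    rw [e2, ej] at hj3
    exact hB ⟨j, hj2, lt_trans h1 hj3, hj3⟩

lemma wt_swap_A {σ : Equiv.Perm (Fin n)} (hσ : Cond r σ)
    (hA : ∃ j : Fin n, (j : ℕ) + 2 = r ∧ σ p < σ j ∧ σ q < σ j) :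
    wt σ + wt (σ * Equiv.swap p q) = 0 := by
  obtain ⟨j, hj2, hpj, hqj⟩ := hA
  have hσ' := swap_mem_C hp hq hσ
  have e1 : (σ * Equiv.swap p q) p = σ q := by simp
  have e2 : (σ * Equiv.swap p q) q = σ p := by simp
  have ej : (σ * Equiv.swap p q) j = σ j := by
    rw [Equiv.Perm.mul_apply, swap_ne hp hq (by omega) (by omega)]
  have hne : σ p ≠ σ q := fun h => by
    have := σ.injective h
    have : (p : ℕ) = (q : ℕ) := congrArg Fin.val this
    omega
  rw [wt, wt, occ_eq hp hq hσ, occ_eq hp hq hσ', small_card_eq hp hq]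
  rcases lt_or_gt_of_ne hne with h | h
  · rw [if_neg (fun hh => absurd hh.1 (not_lt.mpr (le_of_lt h))),
      if_pos ⟨by rw [e1, e2]; exact h, j, hj2, by rw [e1, ej]; exact hqj⟩]
    simp [pow_succ]
  · rw [if_pos ⟨h, j, hj2, hpj⟩,
      if_neg (fun hh => absurd (by rw [e1, e2] at hh; exact hh.1 : σ p < σ q)
        (not_lt.mpr (le_of_lt h)))]
    simp [pow_succ]

end Step

lemma step {r : ℕ} (hr1 : 1 ≤ r) (hrn : r < n) :
    ∑ σ ∈ C n r, wt σ = 2 * ∑ σ ∈ C n (r - 1), wt σ := by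
  classical
  set p : Fin n := ⟨r - 1, by omega⟩ with hpdef
  set q : Fin n := ⟨r, hrn⟩ with hqdef
  have hp : (p : ℕ) + 1 = r := by simp only [hpdef]; omega
  have hq : (q : ℕ) = r := rfl
  set Acond : Equiv.Perm (Fin n) → Prop :=
    fun σ => ∃ j : Fin n, (j : ℕ) + 2 = r ∧ σ p < σ j ∧ σ q < σ j with hAdef
  rw [← Finset.sum_filter_add_sum_filter_not (C n r) Acond wt]
  have hA : ∑ σ ∈ (C n r).filter Acond, wt σ = 0 := by
    apply Finset.sum_involution (g := fun σ _ => σ * Equiv.swap p q)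
    · intro σ hσ
      exact wt_swap_A hp hq (mem_C.mp (mem_filter.mp hσ).1) (mem_filter.mp hσ).2
    · intro σ hσ _
      intro h
      have := congrArg (fun τ : Equiv.Perm (Fin n) => τ p) h
      simp only [Equiv.Perm.mul_apply, Equiv.swap_apply_left] at this
      have := congrArg Fin.val (σ.injective this)
      omega
    · intro σ hσ
      obtain ⟨hσC, j, hj2, h3, h4⟩ := mem_filter.mp hσ
      have hσC' := mem_C.mp hσC
      refine mem_filter.mpr ⟨mem_C.mpr (swap_mem_C hp hq hσC'), j, hj2, ?_, ?_⟩
      · rw [Equiv.Perm.mul_apply, Equiv.Perm.mul_apply, Equiv.swap_apply_left,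
          swap_ne hp hq (by omega) (by omega)]
        exact h4
      · rw [Equiv.Perm.mul_apply, Equiv.Perm.mul_apply, Equiv.swap_apply_right,
          swap_ne hp hq (by omega) (by omega)]
        exact h3
    · intro σ hσ
      rw [mul_assoc, Equiv.swap_mul_self, mul_one]
  rw [hA, zero_add]
  set B : Finset (Equiv.Perm (Fin n)) := (C n r).filter (fun σ => ¬ Acond σ) with hBdef
  have hBsplit := Finset.sum_filter_add_sum_filter_not B (fun σ => σ p < σ q) wt
  have hplus : B.filter (fun σ => σ p < σ q) = C n (r - 1) := by
    ext σ
    simp only [hBdef, mem_filter, mem_C, hAdef]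
    constructor
    · rintro ⟨⟨hσ, hnA⟩, hlt⟩
      constructor
      · intro j k hj hjk
        rcases le_or_gt r (j : ℕ) with hjr | hjr
        · exact hσ.1 j k hjr hjk
        · have hjp : j = p := Fin.ext (by simp only [hpdef]; omega)
          have hkr : r ≤ (k : ℕ) := by have := Fin.lt_def.mp hjk; simp only [hpdef] at hjp; omega
          rcases eq_or_lt_of_le hkr with hk | hk
          · have : k = q := Fin.ext (by omega)
            rw [hjp, this]; exact hlt
          · rw [hjp]; exact hσ.2 p k hp (by omega)
      · intro j k hj hk
        have hr2 : 2 ≤ r := by omega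
        have hj2 : (j : ℕ) + 2 = r := by omega
        have hjq : σ j < σ q := by
          have hne1 : σ j ≠ σ q := fun h => by
            have := congrArg Fin.val (σ.injective h); omega
          rcases lt_or_gt_of_ne hne1 with h | h
          · exact h
          · exact absurd (hnA ⟨j, hj2, lt_trans hlt h, h⟩) not_false
        rcases eq_or_lt_of_le (show r ≤ (k : ℕ) by omega) with hkk | hkk
        · have : k = q := Fin.ext (by omega)
          rw [this]; exact hjq
        · exact lt_trans hjq (hσ.1 q k (by omega) (by rw [Fin.lt_def]; omega))
    · intro hσ
      have hC : Cond r σ := by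
        constructor
        · intro j k hj hjk
          exact hσ.1 j k (by omega) hjk
        · intro j k hj hk
          exact hσ.1 j k (by omega) (by rw [Fin.lt_def]; omega)
      refine ⟨⟨hC, ?_⟩, ?_⟩
      · rintro ⟨j, hj2, h3, h4⟩
        have := hσ.2 j q (by omega) (by omega)
        exact absurd this (not_lt.mpr (le_of_lt h4))
      · exact hσ.1 p q (by simp only [hpdef]; omega) (by rw [Fin.lt_def]; omega)
  have hminus : ∑ σ ∈ B.filter (fun σ => ¬ σ p < σ q), wt σ
      = ∑ σ ∈ B.filter (fun σ => σ p < σ q), wt σ := by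
    have key : ∀ σ ∈ B, σ * Equiv.swap p q ∈ B ∧ wt (σ * Equiv.swap p q) = wt σ := by
      intro σ hσ
      obtain ⟨hσC, hnA⟩ := mem_filter.mp hσ
      have hσC' := mem_C.mp hσC
      have hnA' : ¬ Acond (σ * Equiv.swap p q) := by
        rintro ⟨j, hj2, h3, h4⟩
        rw [Equiv.Perm.mul_apply, Equiv.Perm.mul_apply, Equiv.swap_apply_left,
          swap_ne hp hq (by omega) (by omega)] at h3
        rw [Equiv.Perm.mul_apply, Equiv.Perm.mul_apply, Equiv.swap_apply_right,
          swap_ne hp hq (by omega) (by omega)] at h4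
        exact hnA ⟨j, hj2, h4, h3⟩
      refine ⟨mem_filter.mpr ⟨mem_C.mpr (swap_mem_C hp hq hσC'), hnA'⟩, ?_⟩
      rw [wt, wt, occ_swap_B hp hq hσC' (by rw [hAdef] at hnA; exact hnA)]
    have hback : ∀ σ : Equiv.Perm (Fin n), (σ * Equiv.swap p q) * Equiv.swap p q = σ := by
      intro σ; rw [mul_assoc, Equiv.swap_mul_self, mul_one]
    have hne : ∀ σ : Equiv.Perm (Fin n), σ p ≠ σ q := fun σ h => by
      have := congrArg Fin.val (σ.injective h); omega
    refine Finset.sum_bij' (fun σ _ => σ * Equiv.swap p q) (fun σ _ => σ * Equiv.swap p q)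
      ?_ ?_ ?_ ?_ ?_
    · intro σ hσ
      obtain ⟨hσB, hlt⟩ := mem_filter.mp hσ
      refine mem_filter.mpr ⟨(key σ hσB).1, ?_⟩
      have : σ q < σ p := (lt_or_gt_of_ne (hne σ)).resolve_left hlt
      simpa using this
    · intro σ hσ
      obtain ⟨hσB, hlt⟩ := mem_filter.mp hσ
      refine mem_filter.mpr ⟨(key σ hσB).1, ?_⟩
      simp only [Equiv.Perm.mul_apply, Equiv.swap_apply_left, Equiv.swap_apply_right]
      exact not_lt.mpr (le_of_lt hlt)
    · intro σ hσ; exact hback σ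
    · intro σ hσ; exact hback σ
    · intro σ hσ
      exact ((key σ (mem_filter.mp hσ).1).2).symm
  rw [← hBsplit, hminus, hplus]
  ring

set_option linter.deprecated false in
lemma C_zero : C n 0 = {1} := by
  ext σ
  simp only [mem_C, mem_singleton]
  constructor
  · intro hσ
    have hm : StrictMono σ := fun a b h => hσ.1 a b (Nat.zero_le _) h
    have hid : StrictMono (id : Fin n → Fin n) := strictMono_id
    have hr : Set.range σ = Set.range (id : Fin n → Fin n) := by
      rw [Set.range_id, Set.range_eq_univ]
      exact σ.surjective
    have h2 : ⇑σ = (id : Fin n → Fin n) := (hm.range_inj hid).mp hr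
    exact Equiv.ext fun x => congrFun h2 x
  · rintro rfl
    exact ⟨fun j k _ h => h, fun j k hj _ => absurd hj (by omega)⟩

lemma occ_one : occ (1 : Equiv.Perm (Fin n)) = 0 := by
  rw [occ, Finset.card_eq_zero, occSet, Finset.filter_eq_empty_iff]
  rintro x _ ⟨i1, h1, h2, h3, h4⟩
  simp only [Equiv.Perm.one_apply] at h3
  have := Fin.lt_def.mp h3
  omega

lemma total (hn : 0 < n) : ∀ r, r < n → ∑ σ ∈ C n r, wt σ = 2 ^ r := by
  intro r
  induction r with
  | zero =>
    intro _
    rw [C_zero, Finset.sum_singleton, wt, occ_one, pow_zero, pow_zero]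
  | succ r ih =>
    intro hr
    rw [step (by omega) hr, Nat.add_sub_cancel, ih (by omega), pow_succ]
    ring

lemma C_top (hn : 0 < n) : C n (n - 1) = univ := by
  ext σ
  simp only [mem_univ, iff_true, mem_C]
  constructor
  · intro j k hj hjk
    have h1 := Fin.lt_def.mp hjk
    have h2 := k.isLt
    omega
  · intro j k hj hk
    have := k.isLt
    omega

end P321

/-- The generating function of the number of occurrences of the vincular
pattern `32-1` on `S_n` evaluated at `q = -1` equals `2^(n-1)`. An occurrence
is a pair of indices `(i,k)` with `i+1 < k` and `σ i > σ (i+1) > σ k`. -/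
theorem pattern_32_1_q_eq_neg_one (n : ℕ) (hn : 0 < n) :
    ∑ σ : Equiv.Perm (Fin n),
      (-1 : ℤ) ^ (univ.filter (fun p : Fin n × Fin n =>
        ∃ i1 : Fin n, (i1 : ℕ) = (p.1 : ℕ) + 1 ∧ i1 < p.2 ∧
          σ i1 < σ p.1 ∧ σ p.2 < σ i1)).card
      = 2 ^ (n - 1) := by
  have := P321.total (n := n) hn (n - 1) (by omega)
  rw [P321.C_top hn] at this
  exact this
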